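/- arXiv:2008.11824 — 6 statements merged into one kernel-verified Lean document; each statement's English description precedes it below -/
import Mathlib

section
/- Let h : ℝ^d → ℝ be convex and M-smooth for a positive semidefinite matrix M (i.e., h(x+t) ≤ h(x) + ⟨∇h(x), t⟩ + (1/2)⟨Mt, t⟩ for all x, t). Then for all x, y, the Bregman distance satisfies D_h(x,y) := h(x) - h(y) - ⟨∇h(y), x - y⟩ ≥ (1/2)‖∇h(x) - ∇h(y)‖²_{M†}, where M† is the Moore–Penrose pseudoinverse and ‖v‖²_{M†} = ⟨M†v, v⟩. -/
open Matrix

/-- A pseudoinverse of a symmetric matrix is symmetric. -/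
lemma pinv_symm_aux {d : ℕ} (M Mdag : Matrix (Fin d) (Fin d) ℝ)
    (hMsymm : Mᵀ = M)
    (hP1 : M * Mdag * M = M) (hP2 : Mdag * M * Mdag = Mdag)
    (hP3 : (M * Mdag)ᵀ = M * Mdag) (hP4 : (Mdag * M)ᵀ = Mdag * M) :
    Mdagᵀ = Mdag := by
  have hACA : M * Mdagᵀ * M = M := by
    have h1 : (M * Mdag * M)ᵀ = Mᵀ * Mdagᵀ * Mᵀ := by
      rw [transpose_mul, transpose_mul, mul_assoc]
    rw [hP1, hMsymm] at h1
    exact h1.symm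
  have hCA : Mdagᵀ * M = M * Mdag := by
    calc Mdagᵀ * M = Mdagᵀ * Mᵀ := by rw [hMsymm]
    _ = (M * Mdag)ᵀ := (transpose_mul M Mdag).symm
    _ = M * Mdag := hP3
  have hCAsymm : (Mdagᵀ * M)ᵀ = Mdagᵀ * M := by rw [hCA, hP3]
  have hBAeqCA : Mdag * M = Mdagᵀ * M := by
    calc Mdag * M = Mdag * (M * Mdagᵀ * M) := by rw [hACA]
    _ = (Mdag * M) * (Mdagᵀ * M) := by simp only [mul_assoc]
    _ = (Mdag * M)ᵀ * (Mdagᵀ * M)ᵀ := by rw [hP4, hCAsymm]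
    _ = ((Mdagᵀ * M) * (Mdag * M))ᵀ := (transpose_mul _ _).symm
    _ = (Mdagᵀ * (M * Mdag * M))ᵀ := by simp only [mul_assoc]
    _ = (Mdagᵀ * M)ᵀ := by rw [hP1]
    _ = Mdagᵀ * M := hCAsymm
  have hkey : Mdag = Mdagᵀ * M * Mdag := by
    calc Mdag = Mdag * M * Mdag := hP2.symm
    _ = Mdagᵀ * M * Mdag := by rw [hBAeqCA]
  calc Mdagᵀ = (Mdagᵀ * M * Mdag)ᵀ := by rw [← hkey]
  _ = Mdagᵀ * (Mdagᵀ * M)ᵀ := by rw [transpose_mul]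
  _ = Mdagᵀ * (Mᵀ * Mdag) := by rw [transpose_mul, transpose_transpose]
  _ = Mdagᵀ * M * Mdag := by rw [hMsymm, mul_assoc]
  _ = Mdag := hkey.symm

/-- Bregman distance lower bound: for convex `M`-smooth `h` with gradient `g`,
`D_h(x,y) ≥ (1/2)‖g x - g y‖²_{M†}` where `Mdag` is the Moore–Penrose pseudoinverse of `M`. -/
theorem bregman_ge_half_pinv_norm {d : ℕ}
    (h : (Fin d → ℝ) → ℝ) (g : (Fin d → ℝ) → (Fin d → ℝ))
    (M Mdag : Matrix (Fin d) (Fin d) ℝ)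
    (hMsymm : Mᵀ = M)
    (hMpsd : ∀ v : Fin d → ℝ, 0 ≤ v ⬝ᵥ M.mulVec v)
    (hP1 : M * Mdag * M = M) (hP2 : Mdag * M * Mdag = Mdag)
    (hP3 : (M * Mdag)ᵀ = M * Mdag) (hP4 : (Mdag * M)ᵀ = Mdag * M)
    (hconv : ∀ x y : Fin d → ℝ, h y + g y ⬝ᵥ (x - y) ≤ h x)
    (hsmooth : ∀ x t : Fin d → ℝ,
      h (x + t) ≤ h x + g x ⬝ᵥ t + (1/2) * (M.mulVec t ⬝ᵥ t)) :
    ∀ x y : Fin d → ℝ,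
      (1/2) * (Mdag.mulVec (g x - g y) ⬝ᵥ (g x - g y)) ≤ h x - h y - g y ⬝ᵥ (x - y) := by
  intro x y
  have hsym : Mdagᵀ = Mdag := pinv_symm_aux M Mdag hMsymm hP1 hP2 hP3 hP4
  set v : Fin d → ℝ := g x - g y with hv
  set t : Fin d → ℝ := -(Mdag.mulVec v) with ht
  -- key quadratic identity: ⟨M t, t⟩ = ⟨Mdag v, v⟩
  have key1 : M.mulVec t ⬝ᵥ t = Mdag.mulVec v ⬝ᵥ v := by
    have e1 : M.mulVec t ⬝ᵥ t = (M * Mdag).mulVec v ⬝ᵥ Mdag.mulVec v := by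
      rw [ht, mulVec_neg, neg_dotProduct, dotProduct_neg, neg_neg, mulVec_mulVec]
    rw [e1, dotProduct_mulVec, ← mulVec_transpose, hsym, mulVec_mulVec, ← mul_assoc, hP2]
  -- ⟨v, t⟩ = -⟨Mdag v, v⟩
  have key2 : v ⬝ᵥ t = -(Mdag.mulVec v ⬝ᵥ v) := by
    rw [ht, dotProduct_neg, dotProduct_comm]
  have h1 : h y + g y ⬝ᵥ (x + t - y) ≤ h (x + t) := hconv (x + t) y
  have h2 : h (x + t) ≤ h x + g x ⬝ᵥ t + (1/2) * (M.mulVec t ⬝ᵥ t) := hsmooth x t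
  have e2 : g y ⬝ᵥ (x + t - y) = g y ⬝ᵥ (x - y) + g y ⬝ᵥ t := by
    rw [show x + t - y = (x - y) + t by ring, dotProduct_add]
  have e3 : g x ⬝ᵥ t = g y ⬝ᵥ t + v ⬝ᵥ t := by
    rw [hv, sub_dotProduct]; ring
  rw [e2] at h1
  rw [e3, key1] at h2
  linarith [key2, h1, h2]
end

section
/- Let h : ℝ^d → ℝ be convex, differentiable, and M-smooth for a positive semidefinite matrix M. Then for all x, y: ⟨∇h(x) - ∇h(y), x - y⟩ ≥ ‖∇h(x) - ∇h(y)‖²_{M†}. -/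
open Matrix

private lemma mulVec_dot_helper {d : ℕ} (A : Matrix (Fin d) (Fin d) ℝ) (u w : Fin d → ℝ) :
    A.mulVec u ⬝ᵥ w = u ⬝ᵥ Aᵀ.mulVec w := by
  rw [Matrix.dotProduct_mulVec, Matrix.vecMul_transpose, dotProduct_comm]

/-- Bregman distance lower bound: for convex `M`-smooth `h` with gradient `g`,
`D_h(x,y) ≥ (1/2)‖g x - g y‖²_{M†}` where `Mdag` is the Moore–Penrose pseudoinverse of `M`. -/
theorem grad_diff_inner_ge_pinv_norm {d : ℕ}
    (h : (Fin d → ℝ) → ℝ) (g : (Fin d → ℝ) → (Fin d → ℝ))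
    (M Mdag : Matrix (Fin d) (Fin d) ℝ)
    (hMsymm : Mᵀ = M)
    (hMpsd : ∀ v : Fin d → ℝ, 0 ≤ v ⬝ᵥ M.mulVec v)
    (hP1 : M * Mdag * M = M) (hP2 : Mdag * M * Mdag = Mdag)
    (hP3 : (M * Mdag)ᵀ = M * Mdag) (hP4 : (Mdag * M)ᵀ = Mdag * M)
    (hconv : ∀ x y : Fin d → ℝ, h y + g y ⬝ᵥ (x - y) ≤ h x)
    (hsmooth : ∀ x t : Fin d → ℝ,
      h (x + t) ≤ h x + g x ⬝ᵥ t + (1/2) * (M.mulVec t ⬝ᵥ t)) :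
    ∀ x y : Fin d → ℝ,
      Mdag.mulVec (g x - g y) ⬝ᵥ (g x - g y) ≤ (g x - g y) ⬝ᵥ (x - y) := by
  -- f1 : M * Mdagᵀ = Mdag * M
  have f1 : M * Mdagᵀ = Mdag * M := by
    calc M * Mdagᵀ = (Mdag * Mᵀ)ᵀ := by rw [Matrix.transpose_mul, Matrix.transpose_transpose]
    _ = (Mdag * M)ᵀ := by rw [hMsymm]
    _ = Mdag * M := hP4
  -- f2 : Mdagᵀ * M = M * Mdag
  have f2 : Mdagᵀ * M = M * Mdag := by
    calc Mdagᵀ * M = (Mᵀ * Mdag)ᵀ := by rw [Matrix.transpose_mul, Matrix.transpose_transpose]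
    _ = (M * Mdag)ᵀ := by rw [hMsymm]
    _ = M * Mdag := hP3
  -- hC1 : M * Mdagᵀ * M = M
  have f4 : Mdag * M * M = M := by
    calc Mdag * M * M = (Mdag * M)ᵀ * Mᵀ := by rw [hP4, hMsymm]
    _ = (M * (Mdag * M))ᵀ := by simp [Matrix.transpose_mul, Matrix.mul_assoc]
    _ = (M * Mdag * M)ᵀ := by rw [Matrix.mul_assoc]
    _ = Mᵀ := by rw [hP1]
    _ = M := hMsymm
  have hC1 : M * Mdagᵀ * M = M := by rw [f1, f4]
  have hC2 : Mdagᵀ * M * Mdagᵀ = Mdagᵀ := by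
    calc Mdagᵀ * M * Mdagᵀ = Mdagᵀ * Mᵀ * Mdagᵀ := by rw [hMsymm]
    _ = (Mdag * (M * Mdag))ᵀ := by
        rw [Matrix.transpose_mul, Matrix.transpose_mul]
    _ = (Mdag * M * Mdag)ᵀ := by rw [Matrix.mul_assoc]
    _ = Mdagᵀ := by rw [hP2]
  -- commutation : M * Mdag = Mdag * M
  have comm : M * Mdag = Mdag * M := by
    calc M * Mdag = (M * Mdagᵀ * M) * Mdag := by rw [hC1]
    _ = (M * Mdagᵀ) * (M * Mdag) := by rw [Matrix.mul_assoc]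
    _ = (M * Mdagᵀ)ᵀᵀ * (M * Mdag)ᵀᵀ := by rw [Matrix.transpose_transpose, Matrix.transpose_transpose]
    _ = ((M * Mdag)ᵀ * (M * Mdagᵀ)ᵀ)ᵀ := by simp [Matrix.transpose_mul, Matrix.mul_assoc]
    _ = ((M * Mdag) * (M * Mdagᵀ))ᵀ := by
        rw [hP3, f1, hP4]
    _ = ((M * Mdag * M) * Mdagᵀ)ᵀ := by rw [Matrix.mul_assoc, Matrix.mul_assoc, Matrix.mul_assoc]
    _ = (M * Mdagᵀ)ᵀ := by rw [hP1]
    _ = Mdag * M := by rw [f1, hP4]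
  -- Mdag is symmetric
  have hsym : Mdagᵀ = Mdag := by
    have e1 : M * Mdag = M * Mdagᵀ := by rw [f1, comm]
    have e2 : Mdag * M = Mdagᵀ * M := by rw [f2, comm]
    calc Mdagᵀ = Mdagᵀ * M * Mdagᵀ := hC2.symm
    _ = Mdag * M * Mdagᵀ := by rw [← e2]
    _ = Mdag * (M * Mdagᵀ) := by rw [Matrix.mul_assoc]
    _ = Mdag * (M * Mdag) := by rw [← e1]
    _ = Mdag * M * Mdag := by rw [Matrix.mul_assoc]
    _ = Mdag := hP2
  -- reduction of the quadratic form along t = Mdag v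
  have quad : ∀ v : Fin d → ℝ,
      M.mulVec (Mdag.mulVec v) ⬝ᵥ (Mdag.mulVec v) = Mdag.mulVec v ⬝ᵥ v := by
    intro v
    have : M.mulVec (Mdag.mulVec v) = (M * Mdag).mulVec v := by
      rw [Matrix.mulVec_mulVec]
    rw [this, mulVec_dot_helper, hP3, Matrix.mulVec_mulVec, ← Matrix.mulVec_mulVec,
      ← Matrix.mulVec_mulVec]
    -- now : v ⬝ᵥ M *ᵥ (Mdag *ᵥ (Mdag *ᵥ v)) vs goal shape; instead compute via comm
    rw [Matrix.mulVec_mulVec, Matrix.mulVec_mulVec, comm, Matrix.mul_assoc, ← Matrix.mul_assoc, hP2]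
    rw [dotProduct_comm]
  -- one-sided key inequality
  have key : ∀ x y : Fin d → ℝ,
      (1/2) * (Mdag.mulVec (g x - g y) ⬝ᵥ (g x - g y)) ≤ h x - h y - g y ⬝ᵥ (x - y) := by
    intro x y
    set v := g x - g y with hv
    set t := -(Mdag.mulVec v) with ht
    have h1 := hconv (x + t) y
    have h2 := hsmooth x t
    have hMt : M.mulVec t ⬝ᵥ t = Mdag.mulVec v ⬝ᵥ v := by
      rw [ht, Matrix.mulVec_neg, neg_dotProduct, dotProduct_neg, neg_neg, quad]
    have hgyt : g y ⬝ᵥ (x + t - y) = g y ⬝ᵥ (x - y) + g y ⬝ᵥ t := by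
      have : x + t - y = (x - y) + t := by ring_nf -- might fail; use abel
      rw [this, dotProduct_add]
    have hvt : g x ⬝ᵥ t - g y ⬝ᵥ t = -(Mdag.mulVec v ⬝ᵥ v) := by
      rw [← sub_dotProduct, ← hv, ht, dotProduct_neg, dotProduct_comm]
    have := le_trans h1 h2
    rw [hgyt, hMt] at this
    linarith [hvt, this]
  intro x y
  have k1 := key x y
  have k2 := key y x
  have hswap : Mdag.mulVec (g y - g x) ⬝ᵥ (g y - g x) = Mdag.mulVec (g x - g y) ⬝ᵥ (g x - g y) := by
    have : g y - g x = -(g x - g y) := by abel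
    rw [this, Matrix.mulVec_neg, neg_dotProduct, dotProduct_neg, neg_neg]
  rw [hswap] at k2
  have hgx : g x ⬝ᵥ (y - x) = -(g x ⬝ᵥ (x - y)) := by
    have : (y - x) = -(x - y) := by abel
    rw [this, dotProduct_neg]
  have hfinal : (g x - g y) ⬝ᵥ (x - y) = g x ⬝ᵥ (x - y) - g y ⬝ᵥ (x - y) := by
    rw [sub_dotProduct]
  linarith [k1, k2, hgx, hfinal]
end

section
/- Let f : ℝ^d → ℝ be convex, differentiable, and M-smooth for a symmetric positive semidefinite matrix M. If x - y ∈ Null(M), then ∇f(x) - ∇f(y) ∈ Null(M). -/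
open Matrix

/-- If `f` is convex and `M`-smooth and `x - y ∈ Null(M)`, then
`f(x) = f(y) + ⟨∇f(y), x - y⟩`. -/
theorem grad_diff_in_nullspace {d : ℕ}
    (f : (Fin d → ℝ) → ℝ) (g : (Fin d → ℝ) → (Fin d → ℝ))
    (M : Matrix (Fin d) (Fin d) ℝ)
    (hMsymm : Mᵀ = M)
    (hMpsd : ∀ v : Fin d → ℝ, 0 ≤ v ⬝ᵥ M.mulVec v)
    (hconv : ∀ x y : Fin d → ℝ, f y + g y ⬝ᵥ (x - y) ≤ f x)
    (hsmooth : ∀ x y : Fin d → ℝ,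
      f x ≤ f y + g y ⬝ᵥ (x - y) + (1/2) * ((x - y) ⬝ᵥ M.mulVec (x - y))) :
    ∀ x y : Fin d → ℝ, M.mulVec (x - y) = 0 → M.mulVec (g x - g y) = 0 := by
  intro x y hxy
  set u := x - y with hu
  -- cross terms with u vanish
  have hcross : ∀ v : Fin d → ℝ, u ⬝ᵥ M.mulVec v = 0 := by
    intro v
    rw [Matrix.dotProduct_mulVec, ← Matrix.mulVec_transpose, hMsymm, hxy, zero_dotProduct]
  have huu : u ⬝ᵥ M.mulVec u = 0 := hcross u
  -- f x = f y + ⟨g y, u⟩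
  have hfx : f x = f y + g y ⬝ᵥ u := by
    have h1 := hconv x y
    have h2 := hsmooth x y
    rw [← hu] at h1 h2
    rw [huu] at h2
    linarith
  -- key inequality
  have key : ∀ (v : Fin d → ℝ) (t : ℝ),
      t * ((g x - g y) ⬝ᵥ v) ≤ t ^ 2 / 2 * (v ⬝ᵥ M.mulVec v) := by
    intro v t
    have h1 := hconv (x + t • v) x
    have h2 := hsmooth (x + t • v) y
    have hz1 : x + t • v - x = t • v := by abel
    have hz2 : x + t • v - y = t • v + u := by rw [hu]; abel
    rw [hz1] at h1
    rw [hz2] at h2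
    have hQ : (t • v + u) ⬝ᵥ M.mulVec (t • v + u) = t ^ 2 * (v ⬝ᵥ M.mulVec v) := by
      rw [mulVec_add, mulVec_smul, dotProduct_add, add_dotProduct, add_dotProduct,
        dotProduct_smul, smul_dotProduct, smul_dotProduct, dotProduct_smul,
        hxy, dotProduct_zero, dotProduct_zero, hcross v]
      simp [smul_eq_mul]
      ring
    rw [hQ] at h2
    have hgy : g y ⬝ᵥ (t • v + u) = t * (g y ⬝ᵥ v) + g y ⬝ᵥ u := by
      rw [dotProduct_add, dotProduct_smul, smul_eq_mul]
    have hgx : g x ⬝ᵥ (t • v) = t * (g x ⬝ᵥ v) := by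
      rw [dotProduct_smul, smul_eq_mul]
    rw [hgy] at h2
    rw [hgx] at h1
    have hsub : (g x - g y) ⬝ᵥ v = g x ⬝ᵥ v - g y ⬝ᵥ v := sub_dotProduct _ _ _
    rw [hsub]
    nlinarith [h1, h2, hfx]
  -- from key, ⟨g x - g y, v⟩ ≤ 0 for all v
  have hle : ∀ v : Fin d → ℝ, (g x - g y) ⬝ᵥ v ≤ 0 := by
    intro v
    by_contra h
    push_neg at h
    set c := (g x - g y) ⬝ᵥ v with hc
    set q := v ⬝ᵥ M.mulVec v with hq
    have hq0 : 0 ≤ q := hMpsd v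
    rcases eq_or_lt_of_le hq0 with hq1 | hq1
    · have := key v 1
      rw [← hc, ← hq, ← hq1] at this
      nlinarith
    · have := key v (c / q)
      rw [← hc, ← hq] at this
      have h2 : (c / q) ^ 2 / 2 * q = c ^ 2 / (2 * q) := by
        field_simp
      rw [h2] at this
      have h3 : c / q * c = c ^ 2 / q := by field_simp
      rw [h3] at this
      rw [div_le_div_iff₀ hq1 (by positivity)] at this
      nlinarith [mul_pos (pow_pos h 2) hq1]
  have hzero : g x - g y = 0 := by
    have h1 := hle (g x - g y)
    have h2 : 0 ≤ (g x - g y) ⬝ᵥ (g x - g y) := Finset.sum_nonneg fun i _ => mul_self_nonneg ((g x - g y) i)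
    have : (g x - g y) ⬝ᵥ (g x - g y) = 0 := le_antisymm h1 h2
    exact (dotProduct_self_eq_zero).mp this
  rw [hzero, mulVec_zero]
end

section
/- Let f : ℝ^d → ℝ be convex, differentiable, M-smooth for a symmetric positive semidefinite matrix M, and bounded below. Then ∇f(x) ∈ Range(M) for every x ∈ ℝ^d. -/
open Matrix RealInnerProductSpace

/-- If `f` is convex and `M`-smooth and `x - y ∈ Null(M)`, then
`f(x) = f(y) + ⟨∇f(y), x - y⟩`. -/
theorem grad_in_range {d : ℕ}
    (f : (Fin d → ℝ) → ℝ) (g : (Fin d → ℝ) → (Fin d → ℝ))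
    (M : Matrix (Fin d) (Fin d) ℝ)
    (hMsymm : Mᵀ = M)
    (hMpsd : ∀ v : Fin d → ℝ, 0 ≤ v ⬝ᵥ M.mulVec v)
    (hconv : ∀ x y : Fin d → ℝ, f y + g y ⬝ᵥ (x - y) ≤ f x)
    (hsmooth : ∀ x y : Fin d → ℝ,
      f x ≤ f y + g y ⬝ᵥ (x - y) + (1/2) * ((x - y) ⬝ᵥ M.mulVec (x - y))) :
    ∀ c : ℝ, (∀ x, c ≤ f x) →
      ∀ x : Fin d → ℝ, ∃ u : Fin d → ℝ, M.mulVec u = g x := by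
  intro c hc x
  -- Step 1: g x is orthogonal to the kernel of M
  have key : ∀ v : Fin d → ℝ, M.mulVec v = 0 → g x ⬝ᵥ v = 0 := by
    intro v hv
    by_contra ha
    set a := g x ⬝ᵥ v with hadef
    have hbound : ∀ t : ℝ, c ≤ f x + t * a := by
      intro t
      have h1 := hsmooth (x + t • v) x
      have h2 : (x + t • v) - x = t • v := by abel
      rw [h2] at h1
      have h3 : M.mulVec (t • v) = 0 := by
        rw [Matrix.mulVec_smul, hv, smul_zero]
      rw [h3] at h1
      have h4 : g x ⬝ᵥ (t • v) = t * a := by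
        rw [hadef, dotProduct_smul]; rfl
      have h5 : (t • v) ⬝ᵥ (0 : Fin d → ℝ) = 0 := dotProduct_zero _
      rw [h4, h5] at h1
      calc c ≤ f (x + t • v) := hc _
        _ ≤ f x + t * a + 1/2 * 0 := h1
        _ = f x + t * a := by ring
    have := hbound ((c - f x - 1) / a)
    rw [div_mul_cancel₀ _ ha] at this
    linarith
  -- Step 2: orthogonal complement of ker M is range M (M symmetric)
  classical
  let S : Submodule ℝ (EuclideanSpace ℝ (Fin d)) := LinearMap.range
    ((WithLp.linearEquiv 2 ℝ (Fin d → ℝ)).symm.toLinearMap ∘ₗ M.mulVecLin)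
  obtain ⟨p, hp, q, hq, hw⟩ :=
    Submodule.exists_add_mem_mem_orthogonal (K := S) (v := WithLp.toLp 2 (g x))
  -- q is in the kernel of M
  have hMq : M.mulVec q.ofLp = 0 := by
    have horth : ∀ u : Fin d → ℝ, (M.mulVec u) ⬝ᵥ q.ofLp = 0 := by
      intro u
      have hmem : WithLp.toLp 2 (M.mulVec u) ∈ S := ⟨u, rfl⟩
      have := (Submodule.mem_orthogonal S q).mp hq _ hmem
      simpa [PiLp.inner_apply, RCLike.inner_apply, dotProduct, mul_comm] using this
    have : (M.mulVec q.ofLp) ⬝ᵥ (M.mulVec q.ofLp) = 0 := by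
      have h := horth (M.mulVec q.ofLp)
      calc (M.mulVec q.ofLp) ⬝ᵥ (M.mulVec q.ofLp)
          = (M.mulVec (M.mulVec q.ofLp)) ⬝ᵥ q.ofLp := by
            rw [dotProduct_comm, Matrix.dotProduct_mulVec,
              ← Matrix.mulVec_transpose, hMsymm]
        _ = 0 := horth _
    exact dotProduct_self_eq_zero.mp this
  -- hence g x ⬝ᵥ q = 0, and also ⟪p, q⟫ = 0, so q = 0
  have hgq : g x ⬝ᵥ q.ofLp = 0 := key q.ofLp hMq
  have hpq : (inner ℝ p q : ℝ) = 0 := (Submodule.mem_orthogonal S q).mp hq p hp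
  have hqq : (inner ℝ q q : ℝ) = 0 := by
    have hqw : (inner ℝ q (WithLp.toLp 2 (g x)) : ℝ) = 0 := by
      simpa [PiLp.inner_apply, RCLike.inner_apply, dotProduct, mul_comm]
        using hgq
    have : (inner ℝ q p : ℝ) + (inner ℝ q q : ℝ) = 0 := by
      rw [← inner_add_right, ← hw]; exact hqw
    have hqp : (inner ℝ q p : ℝ) = 0 := by rw [real_inner_comm]; exact hpq
    linarith
  have hq0 : q = 0 := inner_self_eq_zero.mp hqq
  rw [hq0, add_zero] at hw
  obtain ⟨u, hu⟩ := hp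
  exact ⟨u, by rw [← hw] at hu; exact congrArg WithLp.ofLp hu⟩
end

section
/- Let S be a random orthogonal projection matrix (S² = S = Sᵀ almost surely) on ℝ^d and A a deterministic matrix commuting with S almost surely. For fixed X, Y ∈ ℝ^{d×n}, let Z = (I-S)X + SY. Then E[‖AZ‖²_F] = ‖(I - E[S])^{1/2} A X‖²_F + ‖E[S]^{1/2} A Y‖²_F. -/
open Matrix

lemma aux_key {d n : ℕ} (S A : Matrix (Fin d) (Fin d) ℝ)
    (hproj : S * S = S) (hsymm : Sᵀ = S) (hcomm : A * S = S * A)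
    (X Y : Matrix (Fin d) (Fin n) ℝ) :
    (A * ((1 - S) * X + S * Y))ᵀ * (A * ((1 - S) * X + S * Y))
      = (A * X)ᵀ * ((1 - S) * (A * X)) + (A * Y)ᵀ * (S * (A * Y)) := by
  have hc : A * (1 - S) = (1 - S) * A := by
    rw [Matrix.mul_sub, Matrix.sub_mul, mul_one, one_mul, hcomm]
  have h1 : A * ((1 - S) * X + S * Y) = (1 - S) * (A * X) + S * (A * Y) := by
    rw [Matrix.mul_add, ← Matrix.mul_assoc, ← Matrix.mul_assoc, hc, hcomm,
      Matrix.mul_assoc, Matrix.mul_assoc]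
  rw [h1]
  have hsS : (1 - S)ᵀ = 1 - S := by
    rw [Matrix.transpose_sub, Matrix.transpose_one, hsymm]
  have hid : (1 - S) * (1 - S) = 1 - S := by
    rw [Matrix.mul_sub, mul_one, Matrix.sub_mul, one_mul, hproj, sub_self, sub_zero]
  have h0a : S * (1 - S) = 0 := by
    rw [Matrix.mul_sub, mul_one, hproj, sub_self]
  have h0b : (1 - S) * S = 0 := by
    rw [Matrix.sub_mul, one_mul, hproj, sub_self]
  set M := A * X
  set N := A * Y
  have r1 : (1 - S) * ((1 - S) * M) = (1 - S) * M := by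
    rw [← Matrix.mul_assoc, hid]
  have r2 : (1 - S) * (S * N) = 0 := by
    rw [← Matrix.mul_assoc, h0b, Matrix.zero_mul]
  have r3 : S * ((1 - S) * M) = 0 := by
    rw [← Matrix.mul_assoc, h0a, Matrix.zero_mul]
  have r4 : S * (S * N) = S * N := by
    rw [← Matrix.mul_assoc, hproj]
  calc ((1 - S) * M + S * N)ᵀ * ((1 - S) * M + S * N)
      = (Mᵀ * (1 - S) + Nᵀ * S) * ((1 - S) * M + S * N) := by
        rw [Matrix.transpose_add, Matrix.transpose_mul ((1:Matrix (Fin d) (Fin d) ℝ) - S) M,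
          Matrix.transpose_mul S N, hsS, hsymm]
    _ = Mᵀ * ((1 - S) * ((1 - S) * M)) + Mᵀ * ((1 - S) * (S * N))
        + (Nᵀ * (S * ((1 - S) * M)) + Nᵀ * (S * (S * N))) := by
        rw [Matrix.add_mul, Matrix.mul_add, Matrix.mul_add,
          Matrix.mul_assoc, Matrix.mul_assoc, Matrix.mul_assoc, Matrix.mul_assoc]
    _ = Mᵀ * ((1 - S) * M) + Nᵀ * (S * N) := by
        rw [r1, r2, r3, r4, Matrix.mul_zero, Matrix.mul_zero, add_zero, zero_add]

lemma aux_sqrt {d n : ℕ} (Q : Matrix (Fin d) (Fin d) ℝ) (hQsymm : Qᵀ = Q)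
    (C : Matrix (Fin d) (Fin n) ℝ) :
    Matrix.trace ((Q * C)ᵀ * (Q * C)) = Matrix.trace (Cᵀ * (Q * Q * C)) := by
  rw [Matrix.transpose_mul, hQsymm, Matrix.mul_assoc, ← Matrix.mul_assoc Q Q C]

/-- Projection lemma (iii): for a random orthogonal projection `S` (modeled on a finite
probability space) commuting with a deterministic `A`, and `Z = (I-S)X + SY`,
`E‖AZ‖²_F = ‖(I - E[S])^{1/2} AX‖²_F + ‖E[S]^{1/2} AY‖²_F`. -/
theorem proj_expected_frobenius_decomp {d n : ℕ} {Ω : Type} [Fintype Ω]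
    (p : Ω → ℝ) (hp : ∀ ω, 0 ≤ p ω) (hp1 : ∑ ω, p ω = 1)
    (S : Ω → Matrix (Fin d) (Fin d) ℝ)
    (hproj : ∀ ω, S ω * S ω = S ω) (hsymm : ∀ ω, (S ω)ᵀ = S ω)
    (A : Matrix (Fin d) (Fin d) ℝ) (hcomm : ∀ ω, A * S ω = S ω * A)
    (X Y : Matrix (Fin d) (Fin n) ℝ)
    (ES Q Qt : Matrix (Fin d) (Fin d) ℝ)
    (hES : ES = ∑ ω, p ω • S ω)
    (hQ : Q * Q = 1 - ES) (hQsymm : Qᵀ = Q)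
    (hQpsd : ∀ v : Fin d → ℝ, 0 ≤ v ⬝ᵥ Q.mulVec v)
    (hQt : Qt * Qt = ES) (hQtsymm : Qtᵀ = Qt)
    (hQtpsd : ∀ v : Fin d → ℝ, 0 ≤ v ⬝ᵥ Qt.mulVec v) :
    ∑ ω, p ω * Matrix.trace
        ((A * ((1 - S ω) * X + S ω * Y))ᵀ * (A * ((1 - S ω) * X + S ω * Y)))
      = Matrix.trace ((Q * A * X)ᵀ * (Q * A * X))
        + Matrix.trace ((Qt * A * Y)ᵀ * (Qt * A * Y)) := by
  have lin : ∀ (B : Ω → Matrix (Fin d) (Fin d) ℝ) (C : Matrix (Fin d) (Fin n) ℝ),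
      ∑ ω, p ω * Matrix.trace (Cᵀ * (B ω * C))
        = Matrix.trace (Cᵀ * ((∑ ω, p ω • B ω) * C)) := by
    intro B C
    rw [Matrix.sum_mul, Matrix.mul_sum, Matrix.trace_sum]
    refine Finset.sum_congr rfl fun ω _ => ?_
    rw [Matrix.smul_mul, Matrix.mul_smul, Matrix.trace_smul, smul_eq_mul]
  have sum1 : ∑ ω, p ω • ((1 : Matrix (Fin d) (Fin d) ℝ) - S ω) = 1 - ES := by
    rw [hES]
    simp only [smul_sub]
    rw [Finset.sum_sub_distrib, ← Finset.sum_smul, hp1, one_smul]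
  calc ∑ ω, p ω * Matrix.trace
        ((A * ((1 - S ω) * X + S ω * Y))ᵀ * (A * ((1 - S ω) * X + S ω * Y)))
      = ∑ ω, (p ω * Matrix.trace ((A * X)ᵀ * ((1 - S ω) * (A * X)))
          + p ω * Matrix.trace ((A * Y)ᵀ * (S ω * (A * Y)))) := by
        refine Finset.sum_congr rfl fun ω _ => ?_
        rw [aux_key (S ω) A (hproj ω) (hsymm ω) (hcomm ω) X Y, Matrix.trace_add, mul_add]
    _ = Matrix.trace ((A * X)ᵀ * ((1 - ES) * (A * X)))
        + Matrix.trace ((A * Y)ᵀ * (ES * (A * Y))) := by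
        rw [Finset.sum_add_distrib, lin (fun ω => 1 - S ω) (A * X), lin S (A * Y), sum1, ← hES]
    _ = Matrix.trace ((Q * A * X)ᵀ * (Q * A * X))
        + Matrix.trace ((Qt * A * Y)ᵀ * (Qt * A * Y)) := by
        rw [Matrix.mul_assoc Q A X, Matrix.mul_assoc Qt A Y,
          aux_sqrt Q hQsymm (A * X), aux_sqrt Qt hQtsymm (A * Y), hQ, hQt]
end

section
/- Let f : ℝ^d → ℝ be differentiable and μ-quasi strongly convex with minimizer x* (i.e., f(x*) ≥ f(x) + ⟨∇f(x), x* - x⟩ + (μ/2)‖x* - x‖² for all x). Let ψ be a proper closed convex function and suppose x* = prox_{αψ}(x* - α∇f(x*)) for some α > 0. Let g be a random vector with E[g] = ∇f(x) for a fixed x, and let x⁺ = prox_{αψ}(x - αg). Then E[‖x⁺ - x*‖²] ≤ (1 - αμ)‖x - x*‖² + α²·E[‖g - ∇f(x*)‖²] - 2α·D_f(x, x*), where D_f(x,x*) = f(x) - f(x*) - ⟨∇f(x*), x - x*⟩. -/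
open Matrix

/-- One step of a stochastic proximal gradient method: if `f` is `μ`-quasi strongly
convex with minimizer `x*` (a fixed point of the prox-gradient map), `prox` is
nonexpansive, and `g` is an unbiased estimator of `∇f(x)`, then
`E‖x⁺ - x*‖² ≤ (1 - αμ)‖x - x*‖² + α² E‖g - ∇f(x*)‖² - 2α D_f(x, x*)`. -/
theorem prox_grad_step_contraction {d : ℕ} {Ω : Type} [Fintype Ω]
    (p : Ω → ℝ) (hp : ∀ ω, 0 ≤ p ω) (hp1 : ∑ ω, p ω = 1)
    (f : (Fin d → ℝ) → ℝ) (gf : (Fin d → ℝ) → (Fin d → ℝ))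
    (μ α : ℝ) (hμ : 0 < μ) (hα : 0 < α)
    (xs x : Fin d → ℝ)
    (hqsc : ∀ y : Fin d → ℝ,
      f y + gf y ⬝ᵥ (xs - y) + (μ / 2) * ((xs - y) ⬝ᵥ (xs - y)) ≤ f xs)
    (prox : (Fin d → ℝ) → (Fin d → ℝ))
    (hnonexp : ∀ u v : Fin d → ℝ,
      (prox u - prox v) ⬝ᵥ (prox u - prox v) ≤ (u - v) ⬝ᵥ (u - v))
    (hfix : prox (xs - α • gf xs) = xs)
    (g : Ω → Fin d → ℝ) (hmean : ∑ ω, p ω • g ω = gf x) :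
    ∑ ω, p ω * ((prox (x - α • g ω) - xs) ⬝ᵥ (prox (x - α • g ω) - xs))
      ≤ (1 - α * μ) * ((x - xs) ⬝ᵥ (x - xs))
        + α ^ 2 * ∑ ω, p ω * ((g ω - gf xs) ⬝ᵥ (g ω - gf xs))
        - 2 * α * (f x - f xs - gf xs ⬝ᵥ (x - xs)) := by
  set u := x - xs with hu
  have hc : ∀ v w : Fin d → ℝ, v ⬝ᵥ w = w ⬝ᵥ v := fun v w => dotProduct_comm v w
  -- pointwise bound
  have h1 : ∀ ω, (prox (x - α • g ω) - xs) ⬝ᵥ (prox (x - α • g ω) - xs)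
      ≤ u ⬝ᵥ u - 2 * α * ((g ω - gf xs) ⬝ᵥ u)
        + α ^ 2 * ((g ω - gf xs) ⬝ᵥ (g ω - gf xs)) := by
    intro ω
    have h := hnonexp (x - α • g ω) (xs - α • gf xs)
    rw [hfix] at h
    have heq : (x - α • g ω) - (xs - α • gf xs) = u - α • (g ω - gf xs) := by
      ext i; simp [hu]; ring
    rw [heq] at h
    refine h.trans_eq ?_
    simp only [sub_dotProduct, dotProduct_sub, smul_dotProduct, dotProduct_smul,
      smul_eq_mul]
    rw [hc u (g ω), hc u (gf xs), hc (gf xs) (g ω)]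
    ring
  -- sum the bound pointwise
  have h2 : ∑ ω, p ω * ((prox (x - α • g ω) - xs) ⬝ᵥ (prox (x - α • g ω) - xs))
      ≤ ∑ ω, p ω * (u ⬝ᵥ u - 2 * α * ((g ω - gf xs) ⬝ᵥ u)
        + α ^ 2 * ((g ω - gf xs) ⬝ᵥ (g ω - gf xs))) :=
    Finset.sum_le_sum fun ω _ => mul_le_mul_of_nonneg_left (h1 ω) (hp ω)
  -- the unbiasedness identity
  have hmean' : ∑ ω, p ω * (g ω ⬝ᵥ u) = gf x ⬝ᵥ u := by
    rw [← hmean]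
    simp only [dotProduct, Finset.sum_apply, Pi.smul_apply, smul_eq_mul,
      Finset.mul_sum, Finset.sum_mul]
    rw [Finset.sum_comm]
    exact Finset.sum_congr rfl fun ω _ => Finset.sum_congr rfl fun i _ => by ring
  -- evaluate the sum
  have h3 : ∑ ω, p ω * (u ⬝ᵥ u - 2 * α * ((g ω - gf xs) ⬝ᵥ u)
        + α ^ 2 * ((g ω - gf xs) ⬝ᵥ (g ω - gf xs)))
      = u ⬝ᵥ u - 2 * α * ((gf x ⬝ᵥ u) - (gf xs ⬝ᵥ u))
        + α ^ 2 * ∑ ω, p ω * ((g ω - gf xs) ⬝ᵥ (g ω - gf xs)) := by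
    have e : ∀ ω : Ω, p ω * (u ⬝ᵥ u - 2 * α * ((g ω - gf xs) ⬝ᵥ u)
          + α ^ 2 * ((g ω - gf xs) ⬝ᵥ (g ω - gf xs)))
        = (u ⬝ᵥ u) * p ω - (2 * α) * (p ω * (g ω ⬝ᵥ u))
          + ((2 * α * (gf xs ⬝ᵥ u)) * p ω
            + α ^ 2 * (p ω * ((g ω - gf xs) ⬝ᵥ (g ω - gf xs)))) := by
      intro ω; simp only [sub_dotProduct]; ring
    simp only [e]
    rw [Finset.sum_add_distrib, Finset.sum_sub_distrib, Finset.sum_add_distrib,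
      ← Finset.mul_sum, ← Finset.mul_sum, ← Finset.mul_sum, ← Finset.mul_sum,
      hp1, hmean']
    ring
  -- quasi strong convexity at x
  have h4 : f x - f xs + (μ / 2) * (u ⬝ᵥ u) ≤ gf x ⬝ᵥ u := by
    have h := hqsc x
    have e1 : xs - x = -u := by ext i; simp [hu]
    rw [e1, dotProduct_neg, neg_dotProduct, dotProduct_neg, neg_neg] at h
    linarith
  rw [h3] at h2
  have h5 : 2 * α * (f x - f xs + (μ / 2) * (u ⬝ᵥ u)) ≤ 2 * α * (gf x ⬝ᵥ u) :=
    mul_le_mul_of_nonneg_left h4 (by positivity)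
  linarith
end
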